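/- arXiv:2403.09940 — 3 statements merged into one kernel-verified Lean document; each statement's English description precedes it below -/
import Mathlib

section
/- Let (Ω, ℱ, ℙ) be a probability space with a filtration (ℱ_k)_{k≥0}, and let (M_k)_{k=0}^n be an ℝ^d-valued martingale with respect to (ℱ_k) satisfying M_0 = 0 and ‖M_k − M_{k−1}‖ ≤ 1 almost surely for every 1 ≤ k ≤ n. Then for every δ > 0, ℙ(‖M_n‖ ≥ δ) ≤ 2e² · e^{−δ²/(2n)}. -/
open MeasureTheory Real Nat
open scoped ENNReal

lemma summable_aux (c : ℝ) (hc : 0 ≤ c) : Summable (fun n : ℕ => c ^ n / ((2*n)! : ℝ)) := by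
  refine Summable.of_nonneg_of_le (fun n => by positivity) (fun n => ?_)
    (Real.summable_pow_div_factorial c)
  gcongr
  omega

lemma cosh_sqrt_eq (l s : ℝ) (hs : 0 ≤ s) :
    Real.cosh (l * Real.sqrt s) = ∑' n : ℕ, (l^2*s)^n / ((2*n)! : ℝ) := by
  rw [Real.cosh_eq_tsum]
  congr 1; funext n
  rw [pow_mul, mul_pow, Real.sq_sqrt hs]

lemma convexOn_cosh_sqrt (l : ℝ) :
    ConvexOn ℝ (Set.Ici 0) (fun s => Real.cosh (l * Real.sqrt s)) := by
  refine ⟨convex_Ici 0, fun x hx y hy a b ha hb hab => ?_⟩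
  have hx' : (0:ℝ) ≤ x := hx
  have hy' : (0:ℝ) ≤ y := hy
  have hax : (0:ℝ) ≤ a * x + b * y := by positivity
  have Sx := summable_aux (l^2*x) (by positivity)
  have Sy := summable_aux (l^2*y) (by positivity)
  simp only [smul_eq_mul]
  rw [cosh_sqrt_eq l _ hax, cosh_sqrt_eq l _ hx', cosh_sqrt_eq l _ hy',
    ← tsum_mul_left, ← tsum_mul_left,
    ← Summable.tsum_add (Sx.mul_left a) (Sy.mul_left b)]
  refine Summable.tsum_le_tsum (fun n => ?_) (summable_aux (l^2*(a*x+b*y)) (by positivity))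
    ((Sx.mul_left a).add (Sy.mul_left b))
  have h := (convexOn_pow n).2 (Set.mem_Ici.2 (by positivity : (0:ℝ) ≤ l^2*x))
    (Set.mem_Ici.2 (by positivity : (0:ℝ) ≤ l^2*y)) ha hb hab
  simp only [smul_eq_mul] at h
  have e : l^2*(a*x+b*y) = a*(l^2*x) + b*(l^2*y) := by ring
  rw [e]
  calc (a*(l^2*x) + b*(l^2*y))^n / ((2*n)! : ℝ)
      ≤ (a*(l^2*x)^n + b*(l^2*y)^n) / ((2*n)! : ℝ) := by gcongr
    _ = a * ((l^2*x)^n / ((2*n)! : ℝ)) + b * ((l^2*y)^n / ((2*n)! : ℝ)) := by ring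

lemma key_ineq {d : ℕ} (l : ℝ) (hl : 0 ≤ l) (x y : EuclideanSpace ℝ (Fin d)) (hy : ‖y‖ ≤ 1) :
    Real.cosh (l * ‖x + y‖) ≤ Real.cosh l * Real.cosh (l * ‖x‖)
      + (Real.sinh l * (Real.sinh (l * ‖x‖) / ‖x‖)) * (inner ℝ x y : ℝ) := by
  rcases eq_or_ne x 0 with rfl | hx
  · simp only [inner_zero_left, mul_zero, add_zero, norm_zero, mul_zero, Real.cosh_zero,
      mul_one, zero_add]
    exact Real.cosh_le_cosh.2 (by
      rw [abs_of_nonneg (by positivity), abs_of_nonneg hl]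
      exact mul_le_of_le_one_right hl hy)
  · have ha0 : 0 < ‖x‖ := norm_pos_iff.2 hx
    set a : ℝ := ‖x‖ with ha
    set t : ℝ := (inner ℝ x y : ℝ) with htdef
    have ht : |t| ≤ a := by
      have h1 := abs_real_inner_le_norm x y
      have : ‖x‖ * ‖y‖ ≤ a * 1 := by rw [← ha]; exact mul_le_mul_of_nonneg_left hy ha0.le
      simpa using h1.trans (by simpa using this)
    have ht1 : -a ≤ t := (abs_le.1 ht).1
    have ht2 : t ≤ a := (abs_le.1 ht).2
    have hs : ‖x+y‖^2 ≤ a^2 + 2*t + 1 := by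
      have h2 := @norm_add_sq_real (EuclideanSpace ℝ (Fin d)) _ _ x y
      have h3 : ‖y‖^2 ≤ 1 := by nlinarith [norm_nonneg y]
      rw [h2]; nlinarith
    have hsnn : (0:ℝ) ≤ a^2 + 2*t + 1 := by nlinarith
    have h1 : Real.cosh (l*‖x+y‖) ≤ Real.cosh (l * Real.sqrt (a^2+2*t+1)) := by
      refine Real.cosh_le_cosh.2 ?_
      rw [abs_of_nonneg (by positivity), abs_of_nonneg (by positivity)]
      refine mul_le_mul_of_nonneg_left ?_ hl
      exact (Real.le_sqrt (norm_nonneg _) hsnn).2 hs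
    set u : ℝ := t / a with hu
    have hu1 : |u| ≤ 1 := by rw [hu, abs_div, abs_of_nonneg ha0.le]; exact (div_le_one ha0).2 ht
    have w1 : (0:ℝ) ≤ (1 - u)/2 := by cases abs_le.1 hu1; linarith
    have w2 : (0:ℝ) ≤ (1 + u)/2 := by cases abs_le.1 hu1; linarith
    have hcomb : a^2+2*t+1 = ((1-u)/2) • ((a-1)^2) + ((1+u)/2) • ((a+1)^2) := by
      simp only [smul_eq_mul, hu]
      field_simp
      ring
    have h2 := (convexOn_cosh_sqrt l).2 (Set.mem_Ici.2 (sq_nonneg (a-1)))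
      (Set.mem_Ici.2 (sq_nonneg (a+1))) w1 w2 (by ring)
    rw [← hcomb] at h2
    simp only [smul_eq_mul, Real.sqrt_sq_eq_abs] at h2
    have e1 : Real.cosh (l * |a-1|) = Real.cosh (l*a - l) := by
      have e : l * |a-1| = |l*(a-1)| := by rw [abs_mul, abs_of_nonneg hl]
      rw [e, Real.cosh_abs, mul_sub, mul_one]
    have e2 : Real.cosh (l * |a+1|) = Real.cosh (l*a + l) := by
      rw [abs_of_nonneg (by positivity)]; ring_nf
    rw [e1, e2, Real.cosh_sub, Real.cosh_add] at h2
    refine (h1.trans h2).trans (le_of_eq ?_)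
    have : Real.sinh l * (Real.sinh (l * a) / a) * t
        = u * (Real.sinh (l*a) * Real.sinh l) := by
      rw [hu]; field_simp
    rw [this]; ring

lemma coord_le_norm {d : ℕ} (x : EuclideanSpace ℝ (Fin d)) (i : Fin d) : |x i| ≤ ‖x‖ := by
  rw [EuclideanSpace.norm_eq, ← Real.sqrt_sq_eq_abs]
  refine Real.sqrt_le_sqrt ?_
  have : x i ^ 2 = ‖x i‖ ^ 2 := by rw [Real.norm_eq_abs, sq_abs]
  rw [this]
  exact Finset.single_le_sum (f := fun j => ‖x j‖^2) (fun j _ => by positivity) (Finset.mem_univ i)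

/-- Vector Azuma–Hoeffding inequality: if `(M_k)_{k=0}^n` is an `ℝ^d`-valued
martingale with `M₀ = 0` and `‖M_k − M_{k−1}‖ ≤ 1` a.s. for `1 ≤ k ≤ n`, then for every
`δ > 0`, `ℙ(‖M_n‖ ≥ δ) ≤ 2e² · e^{−δ²/(2n)}`. -/
theorem vector_azuma_hoeffding
    {Ω : Type*} {m0 : MeasurableSpace Ω} (μ : Measure Ω) [IsProbabilityMeasure μ]
    (ℱ : Filtration ℕ m0) (d : ℕ) (n : ℕ)
    (M : ℕ → Ω → EuclideanSpace ℝ (Fin d))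
    (hM : Martingale M ℱ μ)
    (h0 : ∀ᵐ ω ∂μ, M 0 ω = 0)
    (hdiff : ∀ k, 1 ≤ k → k ≤ n → ∀ᵐ ω ∂μ, ‖M k ω - M (k - 1) ω‖ ≤ 1)
    (δ : ℝ) (hδ : 0 < δ) :
    μ {ω | δ ≤ ‖M n ω‖} ≤
      ENNReal.ofReal (2 * Real.exp 2 * Real.exp (-δ ^ 2 / (2 * n))) := by
  classical
  rcases Nat.eq_zero_or_pos n with hn | hn
  · subst hn
    refine (prob_le_one).trans ?_
    have e0 : -δ^2 / (2 * ((0:ℕ):ℝ)) = 0 := by norm_num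
    rw [e0, Real.exp_zero, mul_one, show (1:ℝ≥0∞) = ENNReal.ofReal 1 from ENNReal.ofReal_one.symm]
    exact ENNReal.ofReal_le_ofReal (by nlinarith [Real.one_le_exp (by norm_num : (0:ℝ) ≤ 2)])
  have hN : (0:ℝ) < (n:ℝ) := by exact_mod_cast hn
  set l : ℝ := δ / n with hldef
  have hl : 0 < l := div_pos hδ hN
  set G : ℕ → Ω → ℝ := fun k ω => Real.cosh (l * ‖M k ω‖) with hG
  -- measurability
  have hMsm : ∀ k, AEStronglyMeasurable (M k) μ :=
    fun k => ((hM.stronglyAdapted k).mono (ℱ.le k)).aestronglyMeasurable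
  have hGsm : ∀ k, AEStronglyMeasurable (G k) μ := by
    intro k
    exact (Real.continuous_cosh.comp (continuous_const.mul continuous_norm)).comp_aestronglyMeasurable (hMsm k)
  -- a.e. norm bound
  have hnorm : ∀ k, k ≤ n → ∀ᵐ ω ∂μ, ‖M k ω‖ ≤ (k:ℝ) := by
    intro k
    induction k with
    | zero => intro _; filter_upwards [h0] with ω h using by simp [h]
    | succ k ih =>
      intro hk
      have h2 := hdiff (k+1) (by omega) hk
      simp only [Nat.add_sub_cancel] at h2
      filter_upwards [ih (by omega), h2] with ω e1 e2
      have h3 := norm_add_le (M k ω) (M (k+1) ω - M k ω)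
      rw [add_sub_cancel] at h3
      push_cast
      linarith
  -- integrability
  have hGint : ∀ k, k ≤ n → Integrable (G k) μ := by
    intro k hk
    refine (integrable_const (Real.cosh (l * k))).mono' (hGsm k) ?_
    filter_upwards [hnorm k hk] with ω hb
    rw [Real.norm_eq_abs, abs_of_nonneg (Real.cosh_pos _).le]
    refine Real.cosh_le_cosh.2 ?_
    rw [abs_of_nonneg (by positivity), abs_of_nonneg (by positivity)]
    exact mul_le_mul_of_nonneg_left hb hl.le
  -- the one-step inequality
  have step : ∀ k, k + 1 ≤ n → ∫ ω, G (k+1) ω ∂μ ≤ Real.cosh l * ∫ ω, G k ω ∂μ := by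
    intro k hk
    haveI : SigmaFinite (μ.trim (ℱ.le k)) := by infer_instance
    set D : Ω → EuclideanSpace ℝ (Fin d) := fun ω => M (k+1) ω - M k ω with hD
    have hD1 : ∀ᵐ ω ∂μ, ‖D ω‖ ≤ 1 := by
      have := hdiff (k+1) (by omega) hk
      simpa using this
    set c : EuclideanSpace ℝ (Fin d) → ℝ :=
      fun x => Real.sinh l * (Real.sinh (l * ‖x‖) / ‖x‖) with hc
    have hcmeas : Measurable c :=
      measurable_const.mul ((Real.measurable_sinh.comp
        (measurable_const.mul measurable_norm)).div measurable_norm)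
    set W : Fin d → Ω → ℝ := fun i ω => c (M k ω) * (M k ω i) with hW
    have hDint : Integrable D μ := (hM.integrable (k+1)).sub (hM.integrable k)
    have hDico : ∀ i : Fin d, Integrable (fun ω => D ω i) μ := by
      intro i
      exact (EuclideanSpace.proj i : EuclideanSpace ℝ (Fin d) →L[ℝ] ℝ).integrable_comp hDint
    -- conditional expectation of the increment coordinates vanishes
    have hcond : ∀ i : Fin d, (0 : Ω → ℝ) =ᵐ[μ] μ[fun ω => D ω i | ℱ k] := by
      intro i
      refine ae_eq_condExp_of_forall_setIntegral_eq (ℱ.le k) (hDico i)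
        (fun s _ _ => (integrable_zero _ _ _).integrableOn) (fun s hs _ => ?_)
        stronglyMeasurable_zero.aestronglyMeasurable 
      simp only [Pi.zero_apply, integral_zero]
      symm
      have hDz : ∫ ω in s, D ω ∂μ = 0 := by
        rw [hD]
        rw [integral_sub ((hM.integrable (k+1)).restrict) ((hM.integrable k).restrict)]
        rw [sub_eq_zero]
        exact (hM.setIntegral_eq (Nat.le_succ k) hs).symm
      have e : ∫ ω in s, D ω i ∂μ
          = (EuclideanSpace.proj i : EuclideanSpace ℝ (Fin d) →L[ℝ] ℝ) (∫ ω in s, D ω ∂μ) :=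
        ContinuousLinearMap.integral_comp_comm
          (EuclideanSpace.proj i : EuclideanSpace ℝ (Fin d) →L[ℝ] ℝ) hDint.restrict
      rw [e, hDz, map_zero]
    -- W is ℱ k measurable
    have hWsm : ∀ i, StronglyMeasurable[ℱ k] (W i) := by
      intro i
      have h1 : Measurable[ℱ k] (M k) := (hM.stronglyAdapted k).measurable
      exact ((hcmeas.comp h1).mul
        (((EuclideanSpace.proj i :
          EuclideanSpace ℝ (Fin d) →L[ℝ] ℝ).continuous.measurable).comp h1)).stronglyMeasurable
    -- product integrability
    have hbound : ∀ i : Fin d, ∀ᵐ ω ∂μ, ‖W i ω * D ω i‖ ≤ Real.sinh l * Real.sinh (l * k) := by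
      intro i
      filter_upwards [hnorm k (by omega), hD1] with ω h1 h2
      set x := M k ω with hx
      have hsl : (0:ℝ) ≤ Real.sinh l := Real.sinh_nonneg_iff.2 hl.le
      have hslk : (0:ℝ) ≤ Real.sinh (l * ‖x‖) := Real.sinh_nonneg_iff.2 (by positivity)
      have hxi : |x i| ≤ ‖x‖ := coord_le_norm x i
      have hDi : |D ω i| ≤ 1 := (coord_le_norm (D ω) i).trans h2
      have h5 : |W i ω| ≤ Real.sinh l * Real.sinh (l * ‖x‖) := by
        rcases eq_or_lt_of_le (norm_nonneg x) with hx0 | hx0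
        · have hx0' : M k ω = 0 := by
            rw [hx] at hx0; exact norm_eq_zero.1 hx0.symm
          have hz : |W i ω| = 0 := by simp [hW, hx0']
          rw [hz]; exact mul_nonneg hsl hslk
        · rw [hW]
          simp only []
          rw [← hx]
          simp only [abs_mul]
          rw [abs_of_nonneg (by positivity : (0:ℝ) ≤ c x)]
          rw [hc]
          calc Real.sinh l * (Real.sinh (l * ‖x‖) / ‖x‖) * |x i|
              ≤ Real.sinh l * (Real.sinh (l * ‖x‖) / ‖x‖) * ‖x‖ := by
                refine mul_le_mul_of_nonneg_left hxi ?_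
                positivity
            _ = Real.sinh l * Real.sinh (l * ‖x‖) := by field_simp
      have h6 : Real.sinh (l * ‖x‖) ≤ Real.sinh (l * k) :=
        Real.sinh_le_sinh.2 (mul_le_mul_of_nonneg_left h1 hl.le)
      rw [Real.norm_eq_abs, abs_mul]
      calc |W i ω| * |D ω i| ≤ (Real.sinh l * Real.sinh (l * ‖x‖)) * 1 := by
            refine mul_le_mul h5 hDi (abs_nonneg _) (by positivity)
        _ ≤ Real.sinh l * Real.sinh (l * k) := by
            rw [mul_one]; exact mul_le_mul_of_nonneg_left h6 hsl
    have hcrossint : ∀ i : Fin d, Integrable (fun ω => W i ω * D ω i) μ := by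
      intro i
      refine (integrable_const (Real.sinh l * Real.sinh (l * k))).mono' ?_ (hbound i)
      exact (((hWsm i).mono (ℱ.le k)).aestronglyMeasurable).mul (hDico i).1
    -- cross terms vanish
    have hcross0 : ∀ i : Fin d, ∫ ω, W i ω * D ω i ∂μ = 0 := by
      intro i
      have hint : Integrable (W i * fun ω => D ω i) μ := hcrossint i
      have hpull := condExp_mul_of_stronglyMeasurable_left (hWsm i) hint (hDico i)
      have h2 : μ[W i * fun ω => D ω i | ℱ k] =ᵐ[μ] 0 := by
        refine hpull.trans ?_
        filter_upwards [hcond i] with ω hω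
        simp only [Pi.mul_apply, Pi.zero_apply, ← hω]
        simp
      have h3 : ∫ ω, (W i * fun ω' => D ω' i) ω ∂μ = 0 := by
        rw [← integral_condExp (ℱ.le k) (f := W i * fun ω' => D ω' i), integral_congr_ae h2]
        simp
      simpa using h3
    -- pointwise key inequality
    have hpt : ∀ᵐ ω ∂μ, G (k+1) ω ≤ Real.cosh l * G k ω + ∑ i : Fin d, W i ω * D ω i := by
      filter_upwards [hD1] with ω h2
      have hxy : M (k+1) ω = M k ω + D ω := by simp [hD]
      have h3 := key_ineq l hl.le (M k ω) (D ω) h2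
      rw [← hxy] at h3
      refine h3.trans (le_of_eq ?_)
      congr 1
      have hinner : (inner ℝ (M k ω) (D ω) : ℝ) = ∑ i : Fin d, (M k ω i) * (D ω i) := by
        simp [PiLp.inner_apply, RCLike.inner_apply, conj_trivial, mul_comm]
      rw [hinner, Finset.mul_sum]
      refine Finset.sum_congr rfl (fun i _ => ?_)
      rw [hW]; ring
    have hsumint : Integrable (fun ω => ∑ i : Fin d, W i ω * D ω i) μ :=
      integrable_finset_sum _ (fun i _ => hcrossint i)
    have hrhsint : Integrable (fun ω => Real.cosh l * G k ω + ∑ i : Fin d, W i ω * D ω i) μ :=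
      ((hGint k (by omega)).const_mul _).add hsumint
    calc ∫ ω, G (k+1) ω ∂μ
        ≤ ∫ ω, (Real.cosh l * G k ω + ∑ i : Fin d, W i ω * D ω i) ∂μ :=
          integral_mono_ae (hGint (k+1) hk) hrhsint hpt
      _ = Real.cosh l * ∫ ω, G k ω ∂μ + ∑ i : Fin d, ∫ ω, W i ω * D ω i ∂μ := by
          rw [integral_add ((hGint k (by omega)).const_mul _) hsumint, integral_const_mul _ _,
            integral_finset_sum _ (fun i _ => hcrossint i)]
      _ = Real.cosh l * ∫ ω, G k ω ∂μ := by simp [hcross0]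
  -- iterate
  have main : ∀ k, k ≤ n → ∫ ω, G k ω ∂μ ≤ (Real.cosh l)^k := by
    intro k
    induction k with
    | zero =>
      intro _
      have he : ∫ ω, G 0 ω ∂μ = 1 := by
        rw [integral_congr_ae (g := fun _ => (1:ℝ)) ?_]
        · simp
        · filter_upwards [h0] with ω hω; simp [hG, hω]
      simp [he]
    | succ k ih =>
      intro hk
      refine (step k hk).trans ?_
      calc Real.cosh l * ∫ ω, G k ω ∂μ ≤ Real.cosh l * (Real.cosh l)^k :=
            mul_le_mul_of_nonneg_left (ih (by omega)) (Real.cosh_pos _).le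
        _ = (Real.cosh l)^(k+1) := by ring
  -- Markov / Chernoff
  have hGnn : 0 ≤ᵐ[μ] G n := ae_of_all _ (fun ω => (Real.cosh_pos _).le)
  have markov := mul_meas_ge_le_integral_of_nonneg hGnn (hGint n le_rfl) (Real.cosh (l*δ))
  have hsub : {ω | δ ≤ ‖M n ω‖} ⊆ {ω | Real.cosh (l*δ) ≤ G n ω} := by
    intro ω hω
    simp only [Set.mem_setOf_eq] at *
    refine Real.cosh_le_cosh.2 ?_
    rw [abs_of_nonneg (by positivity), abs_of_nonneg (by positivity)]
    exact mul_le_mul_of_nonneg_left hω hl.le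
  have hfin : μ {ω | Real.cosh (l*δ) ≤ G n ω} ≠ ⊤ := measure_ne_top μ _
  have hcoshpos : (0:ℝ) < Real.cosh (l*δ) := Real.cosh_pos _
  have htr : (μ {ω | Real.cosh (l*δ) ≤ G n ω}).toReal ≤ (Real.cosh l)^n / Real.cosh (l*δ) := by
    rw [le_div_iff₀ hcoshpos]
    calc (μ {ω | Real.cosh (l*δ) ≤ G n ω}).toReal * Real.cosh (l*δ)
        = Real.cosh (l*δ) * (μ {ω | Real.cosh (l*δ) ≤ G n ω}).toReal := by ring
      _ ≤ ∫ ω, G n ω ∂μ := markov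
      _ ≤ (Real.cosh l)^n := main n le_rfl
  -- numerics
  have h1 : (Real.cosh l)^n ≤ Real.exp ((n:ℝ) * (l^2/2)) := by
    calc (Real.cosh l)^n ≤ (Real.exp (l^2/2))^n :=
          pow_le_pow_left₀ (Real.cosh_pos _).le (Real.cosh_le_exp_half_sq l) n
      _ = Real.exp ((n:ℝ) * (l^2/2)) := (Real.exp_nat_mul _ n).symm
  have h2 : Real.exp (l*δ)/2 ≤ Real.cosh (l*δ) := by
    rw [Real.cosh_eq]
    have := Real.exp_pos (-(l*δ))
    linarith
  have h3 : (Real.cosh l)^n / Real.cosh (l*δ) ≤ 2 * Real.exp ((n:ℝ)*(l^2/2) - l*δ) := by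
    calc (Real.cosh l)^n / Real.cosh (l*δ)
        ≤ Real.exp ((n:ℝ)*(l^2/2)) / (Real.exp (l*δ)/2) :=
          div_le_div₀ (Real.exp_pos _).le h1 (by positivity) h2
      _ = 2 * Real.exp ((n:ℝ)*(l^2/2) - l*δ) := by
          rw [Real.exp_sub]; ring
  have hexp : (n:ℝ)*(l^2/2) - l*δ = -δ^2/(2*n) := by
    rw [hldef]
    field_simp
    ring
  have h4 : (Real.cosh l)^n / Real.cosh (l*δ) ≤ 2 * Real.exp 2 * Real.exp (-δ^2/(2*n)) := by
    rw [hexp] at h3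
    refine h3.trans ?_
    have he2 : (1:ℝ) ≤ Real.exp 2 := Real.one_le_exp (by norm_num)
    nlinarith [Real.exp_pos (-δ^2/(2*(n:ℝ)))]
  calc μ {ω | δ ≤ ‖M n ω‖} ≤ μ {ω | Real.cosh (l*δ) ≤ G n ω} := measure_mono hsub
    _ = ENNReal.ofReal ((μ {ω | Real.cosh (l*δ) ≤ G n ω}).toReal) :=
        (ENNReal.ofReal_toReal hfin).symm
    _ ≤ ENNReal.ofReal (2 * Real.exp 2 * Real.exp (-δ^2/(2*n))) :=
        ENNReal.ofReal_le_ofReal (htr.trans h4)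
end

section
/- Let τ ≥ 2 be an integer and let (r_t)_{t≥0} and (β_t)_{t≥0} be sequences of nonnegative real numbers satisfying r_{t+1} ≤ (1 − 2/(t+τ)) r_t + β_t for all t ≥ 0. Then for all integers 0 ≤ t_0 ≤ T, r_T ≤ (t_0 + τ − 1)² r_{t_0} / (T + τ − 1)² + ( ∑_{t=t_0}^{T−1} β_t (t+τ)² ) / (T + τ − 1)². -/
/-- Lemma 12 of Fatkhullin et al.: if `r_{t+1} ≤ (1 − 2/(t+τ)) r_t + β_t`
for nonnegative sequences with `τ ≥ 2`, then for all `t₀ ≤ T`,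
`r_T ≤ (t₀+τ−1)² r_{t₀}/(T+τ−1)² + (∑_{t=t₀}^{T−1} β_t (t+τ)²)/(T+τ−1)²`. -/
theorem recursive_sequence_bound
    (τ : ℕ) (hτ : 2 ≤ τ) (r β : ℕ → ℝ)
    (hr : ∀ t, 0 ≤ r t) (hβ : ∀ t, 0 ≤ β t)
    (hrec : ∀ t : ℕ, r (t + 1) ≤ (1 - 2 / ((t : ℝ) + τ)) * r t + β t) :
    ∀ t₀ T : ℕ, t₀ ≤ T →
      r T ≤ ((t₀ : ℝ) + τ - 1) ^ 2 * r t₀ / ((T : ℝ) + τ - 1) ^ 2 +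
        (∑ t ∈ Finset.Ico t₀ T, β t * ((t : ℝ) + τ) ^ 2) / ((T : ℝ) + τ - 1) ^ 2 := by
  intro t₀ T hT
  have hτR : (2:ℝ) ≤ (τ:ℝ) := by exact_mod_cast hτ
  -- key telescoped inequality
  have key : ∀ N : ℕ, t₀ ≤ N →
      ((N:ℝ)+τ-2)*((N:ℝ)+τ-1) * r N ≤
        ((t₀:ℝ)+τ-2)*((t₀:ℝ)+τ-1) * r t₀ +
        ∑ t ∈ Finset.Ico t₀ N, β t * (((t:ℝ)+τ-1)*((t:ℝ)+τ)) := by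
    intro N
    induction N with
    | zero =>
      intro h
      have h0 : t₀ = 0 := Nat.le_zero.mp h
      subst h0
      simp
    | succ n ih =>
      intro h
      rcases eq_or_lt_of_le h with heq | hlt
      · rw [heq]; simp
      · have hn : t₀ ≤ n := Nat.lt_succ_iff.mp hlt
        have ihn := ih hn
        have hpos : (0:ℝ) < (n:ℝ)+τ := by
          have : (0:ℝ) ≤ (n:ℝ) := Nat.cast_nonneg n
          linarith
        have h2 : ((n:ℝ)+τ) * r (n+1) ≤ ((n:ℝ)+τ-2) * r n + ((n:ℝ)+τ) * β n := by
          have := mul_le_mul_of_nonneg_left (hrec n) hpos.le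
          have heq2 : ((n:ℝ)+τ) * ((1 - 2 / ((n:ℝ)+τ)) * r n + β n)
              = ((n:ℝ)+τ-2) * r n + ((n:ℝ)+τ) * β n := by
            field_simp
          linarith [heq2 ▸ this]
        have hnm1 : (0:ℝ) ≤ (n:ℝ)+τ-1 := by
          have : (0:ℝ) ≤ (n:ℝ) := Nat.cast_nonneg n
          linarith
        have h3 := mul_le_mul_of_nonneg_left h2 hnm1
        rw [Finset.sum_Ico_succ_top hn]
        push_cast
        nlinarith [h3, ihn]
  -- conclude
  rcases eq_or_lt_of_le hT with heq | hlt
  · subst heq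
    have hd : (0:ℝ) < ((t₀:ℝ)+τ-1) := by
      have : (0:ℝ) ≤ (t₀:ℝ) := Nat.cast_nonneg t₀
      linarith
    rw [Finset.Ico_self, Finset.sum_empty, zero_div, add_zero, mul_comm,
      mul_div_assoc, div_self (by positivity : ((t₀:ℝ)+τ-1)^2 ≠ 0), mul_one]
  · -- T > t₀, so T ≥ 1
    have hT1 : 1 ≤ T := Nat.one_le_iff_ne_zero.mpr (by omega)
    have hTR : (1:ℝ) ≤ (T:ℝ) := by exact_mod_cast hT1
    have ht0T : (t₀:ℝ) + 1 ≤ (T:ℝ) := by exact_mod_cast hlt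
    set d : ℝ := (T:ℝ)+τ-1 with hd
    have hdpos : (0:ℝ) < d := by simp only [hd]; linarith
    have ha2 : (0:ℝ) < (T:ℝ)+τ-2 := by linarith
    have hkey := key T hT
    rw [← add_div, le_div_iff₀ (by positivity : (0:ℝ) < d^2)]
    -- show r T * d^2 ≤ A' + B'
    have step1 : r T * d^2 * ((T:ℝ)+τ-2) ≤
        (((t₀:ℝ)+τ-2)*((t₀:ℝ)+τ-1) * r t₀ +
          ∑ t ∈ Finset.Ico t₀ T, β t * (((t:ℝ)+τ-1)*((t:ℝ)+τ))) * d := by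
      have h' := mul_le_mul_of_nonneg_right hkey hdpos.le
      have e : r T * d^2 * ((T:ℝ)+τ-2) = ((T:ℝ)+τ-2)*((T:ℝ)+τ-1)* r T * d := by
        simp only [hd]; ring
      rw [e]; exact h'
    have stepA : (((t₀:ℝ)+τ-2)*((t₀:ℝ)+τ-1) * r t₀) * d ≤
        (((t₀:ℝ)+τ-1)^2 * r t₀) * ((T:ℝ)+τ-2) := by
      have hcd : (((t₀:ℝ)+τ-2)) * d ≤ (((t₀:ℝ)+τ-1)) * ((T:ℝ)+τ-2) := by
        simp only [hd]; nlinarith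
      have hc : (0:ℝ) ≤ ((t₀:ℝ)+τ-1) := by
        have : (0:ℝ) ≤ (t₀:ℝ) := Nat.cast_nonneg t₀
        linarith
      nlinarith [mul_le_mul_of_nonneg_left hcd (mul_nonneg hc (hr t₀))]
    have stepB : (∑ t ∈ Finset.Ico t₀ T, β t * (((t:ℝ)+τ-1)*((t:ℝ)+τ))) * d ≤
        (∑ t ∈ Finset.Ico t₀ T, β t * ((t:ℝ)+τ)^2) * ((T:ℝ)+τ-2) := by
      rw [Finset.sum_mul, Finset.sum_mul]
      apply Finset.sum_le_sum
      intro t ht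
      have htT : (t:ℝ) + 1 ≤ (T:ℝ) := by
        exact_mod_cast (Finset.mem_Ico.mp ht).2
      have hx : (0:ℝ) ≤ (t:ℝ)+τ := by
        have : (0:ℝ) ≤ (t:ℝ) := Nat.cast_nonneg t
        linarith
      have hxd : ((t:ℝ)+τ-1) * d ≤ ((t:ℝ)+τ) * ((T:ℝ)+τ-2) := by
        simp only [hd]; nlinarith
      nlinarith [mul_le_mul_of_nonneg_left hxd (mul_nonneg (hβ t) hx)]
    have step2 : r T * d^2 * ((T:ℝ)+τ-2) ≤
        (((t₀:ℝ)+τ-1)^2 * r t₀ + ∑ t ∈ Finset.Ico t₀ T, β t * ((t:ℝ)+τ)^2) *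
          ((T:ℝ)+τ-2) := by
      calc r T * d^2 * ((T:ℝ)+τ-2) ≤ _ := step1
        _ ≤ _ := by rw [add_mul, add_mul]; exact add_le_add stepA stepB
    exact le_of_mul_le_mul_right step2 ha2
end

section
/- Let (Ω, ℱ, ℙ) be a probability space, d ≥ 1, N ≥ 1, f < N/2, λ ≥ 0, C > 0, and ε̄ > 0. Let D^{(1)}, …, D^{(N)} be ℝ^d-valued random vectors, G ⊆ {1, …, N} a set of size N − f, g ∈ ℝ^d a fixed vector, and D̄ = (1/(N−f)) ∑_{i∈G} D^{(i)}. Let Y be an ℝ^d-valued random vector such that almost surely ‖Y − D̄‖ ≤ λ max_{i,j∈G} ‖D^{(i)} − D^{(j)}‖. Assume that for every i ∈ G, ‖D^{(i)} − g‖ ≤ C almost surely and ℙ(‖D^{(i)} − g‖ ≥ ε̄) ≤ p. Then 𝔼[‖Y − D̄‖] ≤ 2Cλ(N−f)p + 2λε̄. -/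
open MeasureTheory

/-- expected aggregation error bound. If the aggregator output `Y` is a.s.
within `λ · max_{i,j∈G} ‖D⁽ⁱ⁾ − D⁽ʲ⁾‖` of the honest average `D̄`, each honest estimate
satisfies `‖D⁽ⁱ⁾ − g‖ ≤ C` a.s. and `ℙ(‖D⁽ⁱ⁾ − g‖ ≥ ε̄) ≤ p`, then
`𝔼[‖Y − D̄‖] ≤ 2Cλ(N−f)p + 2λε̄`. -/
theorem expected_aggregation_error_bound
    {Ω : Type*} [MeasurableSpace Ω] (μ : Measure Ω) [IsProbabilityMeasure μ]
    (d N f : ℕ) (hd : 1 ≤ d) (hN : 1 ≤ N) (hf : 2 * f < N)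
    (lam : ℝ) (hlam : 0 ≤ lam) (C : ℝ) (hC : 0 < C) (eps : ℝ) (heps : 0 < eps)
    (D : Fin N → Ω → EuclideanSpace ℝ (Fin d)) (hDmeas : ∀ i, Measurable (D i))
    (G : Finset (Fin N)) (hGcard : G.card = N - f) (hGne : G.Nonempty)
    (g : EuclideanSpace ℝ (Fin d))
    (Y : Ω → EuclideanSpace ℝ (Fin d)) (hYmeas : Measurable Y)
    (hres : ∀ᵐ ω ∂μ,
      ‖Y ω - ((N : ℝ) - f)⁻¹ • ∑ i ∈ G, D i ω‖ ≤
        lam * G.sup' hGne (fun i => G.sup' hGne fun j => ‖D i ω - D j ω‖))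
    (p : ℝ)
    (hbound : ∀ i ∈ G, ∀ᵐ ω ∂μ, ‖D i ω - g‖ ≤ C)
    (hprob : ∀ i ∈ G, (μ {ω | eps ≤ ‖D i ω - g‖}).toReal ≤ p) :
    ∫ ω, ‖Y ω - ((N : ℝ) - f)⁻¹ • ∑ i ∈ G, D i ω‖ ∂μ ≤
      2 * C * lam * ((N : ℝ) - f) * p + 2 * lam * eps := by
  set S : Fin N → Set Ω := fun i => {ω | eps ≤ ‖D i ω - g‖} with hS
  have hSmeas : ∀ i, MeasurableSet (S i) := fun i =>
    measurableSet_le measurable_const ((hDmeas i).sub measurable_const).norm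
  set U : Ω → ℝ := fun ω =>
    2 * lam * (eps + C * ∑ i ∈ G, (S i).indicator (fun _ => (1:ℝ)) ω) with hU
  have hUint : Integrable U μ := by
    apply Integrable.const_mul
    apply (integrable_const eps).add
    apply Integrable.const_mul
    exact integrable_finset_sum G fun i _ =>
      (integrable_const (1:ℝ)).indicator (hSmeas i)
  have hb : ∀ᵐ ω ∂μ, ∀ i ∈ (G : Set (Fin N)), ‖D i ω - g‖ ≤ C :=
    (ae_ball_iff G.countable_toSet).mpr (fun i hi => hbound i hi)
  have hae : ∀ᵐ ω ∂μ, ‖Y ω - ((N : ℝ) - f)⁻¹ • ∑ i ∈ G, D i ω‖ ≤ U ω := by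
    filter_upwards [hres, hb] with ω h1 h2
    have hsum_nonneg : 0 ≤ ∑ i ∈ G, (S i).indicator (fun _ => (1:ℝ)) ω :=
      Finset.sum_nonneg fun i _ => Set.indicator_nonneg (fun _ _ => zero_le_one) ω
    have hMbound : G.sup' hGne (fun i => ‖D i ω - g‖) ≤ eps + C * ∑ i ∈ G, (S i).indicator (fun _ => (1:ℝ)) ω := by
      obtain ⟨i, hi, hEq⟩ := Finset.exists_mem_eq_sup' hGne (fun i => ‖D i ω - g‖)
      rw [show G.sup' hGne (fun i => ‖D i ω - g‖) = ‖D i ω - g‖ from hEq]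
      by_cases hcase : eps ≤ ‖D i ω - g‖
      · have h1' : (1:ℝ) ≤ ∑ j ∈ G, (S j).indicator (fun _ => (1:ℝ)) ω := by
          have : (S i).indicator (fun _ => (1:ℝ)) ω = 1 := Set.indicator_of_mem (show ω ∈ S i from hcase) _
          calc (1:ℝ) = (S i).indicator (fun _ => (1:ℝ)) ω := this.symm
            _ ≤ ∑ j ∈ G, (S j).indicator (fun _ => (1:ℝ)) ω :=
              Finset.single_le_sum (fun j _ =>
                Set.indicator_nonneg (fun _ _ => zero_le_one) ω) hi
        have : ‖D i ω - g‖ ≤ C := h2 i hi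
        nlinarith
      · push_neg at hcase
        nlinarith
    have hsup : G.sup' hGne (fun i => G.sup' hGne fun j => ‖D i ω - D j ω‖) ≤
        2 * G.sup' hGne (fun i => ‖D i ω - g‖) := by
      apply Finset.sup'_le
      intro i hi
      apply Finset.sup'_le
      intro j hj
      have hij : ‖D i ω - D j ω‖ ≤ ‖D i ω - g‖ + ‖D j ω - g‖ := by
        have := norm_sub_le_norm_sub_add_norm_sub (D i ω) g (D j ω)
        calc ‖D i ω - D j ω‖ ≤ ‖D i ω - g‖ + ‖g - D j ω‖ := norm_sub_le_norm_sub_add_norm_sub _ _ _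
          _ = ‖D i ω - g‖ + ‖D j ω - g‖ := by rw [norm_sub_rev g]
      have h1' := Finset.le_sup' (fun i => ‖D i ω - g‖) hi
      have h2' := Finset.le_sup' (fun i => ‖D i ω - g‖) hj
      linarith
    calc ‖Y ω - ((N : ℝ) - f)⁻¹ • ∑ i ∈ G, D i ω‖
        ≤ lam * G.sup' hGne (fun i => G.sup' hGne fun j => ‖D i ω - D j ω‖) := h1
      _ ≤ lam * (2 * G.sup' hGne (fun i => ‖D i ω - g‖)) := mul_le_mul_of_nonneg_left hsup hlam
      _ ≤ lam * (2 * (eps + C * ∑ i ∈ G, (S i).indicator (fun _ => (1:ℝ)) ω)) := by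
          apply mul_le_mul_of_nonneg_left _ hlam; linarith
      _ = U ω := by ring
  have hInt : Integrable (fun ω => ‖Y ω - ((N : ℝ) - f)⁻¹ • ∑ i ∈ G, D i ω‖) μ := by
    apply Integrable.mono' hUint
    · exact ((hYmeas.sub ((Finset.measurable_sum G fun i _ => hDmeas i).const_smul
        ((N : ℝ) - f)⁻¹)).norm).aestronglyMeasurable
    · filter_upwards [hae] with ω h
      simpa using h
  have hp : 0 ≤ p := by
    obtain ⟨i, hi⟩ := hGne
    exact le_trans ENNReal.toReal_nonneg (hprob i hi)
  have hUeq : ∫ ω, U ω ∂μ =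
      2 * lam * (eps + C * ∑ i ∈ G, (μ (S i)).toReal) := by
    rw [hU]
    rw [integral_const_mul]
    congr 1
    rw [integral_add (integrable_const eps)]
    · rw [integral_const]
      simp only [measure_univ, probReal_univ, ENNReal.toReal_one, smul_eq_mul, one_mul]
      congr 1
      rw [integral_const_mul]
      congr 1
      rw [integral_finset_sum G fun i _ => (integrable_const (1:ℝ)).indicator (hSmeas i)]
      refine Finset.sum_congr rfl fun i _ => ?_
      rw [integral_indicator (hSmeas i)]
      simp [Measure.real]
    · exact Integrable.const_mul (integrable_finset_sum G fun i _ =>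
        (integrable_const (1:ℝ)).indicator (hSmeas i)) C
  have hsumle : ∑ i ∈ G, (μ (S i)).toReal ≤ ((N : ℝ) - f) * p := by
    calc ∑ i ∈ G, (μ (S i)).toReal ≤ ∑ i ∈ G, p := Finset.sum_le_sum fun i hi => hprob i hi
      _ = (G.card : ℝ) * p := by rw [Finset.sum_const, nsmul_eq_mul]
      _ = ((N : ℝ) - f) * p := by
          rw [hGcard, Nat.cast_sub (by omega)]
  calc ∫ ω, ‖Y ω - ((N : ℝ) - f)⁻¹ • ∑ i ∈ G, D i ω‖ ∂μ
      ≤ ∫ ω, U ω ∂μ := integral_mono_ae hInt hUint hae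
    _ = 2 * lam * (eps + C * ∑ i ∈ G, (μ (S i)).toReal) := hUeq
    _ ≤ 2 * C * lam * ((N : ℝ) - f) * p + 2 * lam * eps := by
        have key : 2 * lam * C * (∑ i ∈ G, (μ (S i)).toReal) ≤
            2 * lam * C * (((N : ℝ) - f) * p) :=
          mul_le_mul_of_nonneg_left hsumle (by positivity)
        nlinarith [key]
end
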